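/- Let I be a finite set and m ≥ 1. Let a : I → ℝ with a(i) > 0, let ε : I → ℝ with ε(i) ∈ {−1, 1}, let δ : I × Fin m → ℝ with δ(i,k) ∈ {0, 1}, and let s, R : Fin m → ℝ with s(k) > 0 and R(k) > 0; let σ > 0 and n ≥ 2 be given. Suppose v : I → ℝ and h : Fin m → ℝ satisfy the constraint a(i)·v(i) = ε(i)·Σ_k s(k)·h(k)·δ(i,k) for every i ∈ I. Then Σ_i a(i)·v(i)² − σ(n−1)·Σ_k s(k)·h(k)²/R(k)² = Σ_{k,l} c(k,l)·(s(k)h(k))·(s(l)h(l)), where c(k,l) = Σ_i δ(i,k)·δ(i,l)/a(i) − (σ(n−1)/(R(k)²·s(k)))·[k = l]. -/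

import Mathlib

open Finset in
/-- The second variation of the available energy for the Verigin problem without
phase transition, restricted to piecewise-constant perturbations satisfying the
mass constraints, equals the quadratic form of the matrix `C*`. -/
theorem second_variation_matrix_identity (I : Type*) [Fintype I]
    (m : ℕ) (hm : 1 ≤ m) (n : ℕ) (hn : 2 ≤ n)
    (a : I → ℝ) (ha : ∀ i, 0 < a i)
    (ε : I → ℝ) (hε : ∀ i, ε i = -1 ∨ ε i = 1)
    (δ : I → Fin m → ℝ) (hδ : ∀ i k, δ i k = 0 ∨ δ i k = 1)
    (s R : Fin m → ℝ) (hs : ∀ k, 0 < s k) (hR : ∀ k, 0 < R k)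
    (σ : ℝ) (hσ : 0 < σ)
    (v : I → ℝ) (h : Fin m → ℝ)
    (hconstraint : ∀ i, a i * v i = ε i * ∑ k, s k * h k * δ i k) :
    (∑ i, a i * (v i) ^ 2)
        - σ * ((n : ℝ) - 1) * ∑ k, s k * (h k) ^ 2 / (R k) ^ 2
      = ∑ k, ∑ l,
          ((∑ i, δ i k * δ i l / a i)
              - (σ * ((n : ℝ) - 1) / ((R k) ^ 2 * s k))
                  * (if k = l then (1 : ℝ) else 0))
            * (s k * h k) * (s l * h l) := by
  have h1 : ∀ i, a i * v i ^ 2 = (∑ k, s k * h k * δ i k) ^ 2 / a i := by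
    intro i
    have hai : a i ≠ 0 := (ha i).ne'
    have hε2 : ε i ^ 2 = 1 := by rcases hε i with h' | h' <;> simp [h']
    have : a i * v i ^ 2 = (a i * v i) ^ 2 / a i := by field_simp
    rw [this, hconstraint i, mul_pow, hε2, one_mul]
  -- expand the square as a double sum
  have h2 : ∀ i, (∑ k, s k * h k * δ i k) ^ 2 / a i
      = ∑ k, ∑ l, (δ i k * δ i l / a i) * (s k * h k) * (s l * h l) := by
    intro i
    rw [sq, Finset.sum_mul_sum, Finset.sum_div]
    refine Finset.sum_congr rfl fun k _ => ?_
    rw [Finset.sum_div]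
    refine Finset.sum_congr rfl fun l _ => ?_
    ring
  have h3 : (∑ i, a i * v i ^ 2)
      = ∑ k, ∑ l, (∑ i, δ i k * δ i l / a i) * (s k * h k) * (s l * h l) := by
    calc (∑ i, a i * v i ^ 2)
        = ∑ i, ∑ k, ∑ l, (δ i k * δ i l / a i) * (s k * h k) * (s l * h l) := by
          refine Finset.sum_congr rfl fun i _ => ?_
          rw [h1 i, h2 i]
      _ = ∑ k, ∑ i, ∑ l, (δ i k * δ i l / a i) * (s k * h k) * (s l * h l) :=
          Finset.sum_comm
      _ = ∑ k, ∑ l, (∑ i, δ i k * δ i l / a i) * (s k * h k) * (s l * h l) := by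
          refine Finset.sum_congr rfl fun k _ => ?_
          rw [Finset.sum_comm]
          refine Finset.sum_congr rfl fun l _ => ?_
          rw [Finset.sum_mul, Finset.sum_mul]
  have h4 : (∑ k, ∑ l,
        (σ * ((n : ℝ) - 1) / ((R k) ^ 2 * s k) * (if k = l then (1 : ℝ) else 0))
          * (s k * h k) * (s l * h l))
      = σ * ((n : ℝ) - 1) * ∑ k, s k * (h k) ^ 2 / (R k) ^ 2 := by
    rw [Finset.mul_sum]
    refine Finset.sum_congr rfl fun k _ => ?_
    rw [Finset.sum_eq_single k]
    · have hsk : s k ≠ 0 := (hs k).ne'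
      have hRk : (R k) ^ 2 ≠ 0 := pow_ne_zero 2 (hR k).ne'
      simp only [if_pos rfl, mul_one, ↓reduceIte]
      field_simp
    · intro l _ hl
      simp [Ne.symm hl]
    · intro hk; exact absurd (Finset.mem_univ k) hk
  rw [h3, ← h4, ← Finset.sum_sub_distrib]
  refine Finset.sum_congr rfl fun k _ => ?_
  rw [← Finset.sum_sub_distrib]
  refine Finset.sum_congr rfl fun l _ => ?_
  ring
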